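/- Let x be a chain-point for the chain V_0 ⊊ V_1 ⊊ … ⊊ V_k, let U ⊆ V satisfy x(E(U)) = |U| − 1, let a, b ∈ ℕ with 0 ≤ a ≤ b ≤ k+1, and set S := L_a ∪ L_{a+1} ∪ … ∪ L_b. Then there exists a spanning tree T of G with x_e > 0 for every e ∈ T such that T ∩ E(S ∩ U) is the edge set of a spanning tree of the induced subgraph G(S ∩ U); in particular, the subgraph of G induced on S ∩ U restricted to edges in the support of x is connected. -/

import Mathlib

open Finset
open scoped Classical

variable {V : Type*} [Fintype V]

/-- The set of edges of `G` with one endpoint in `S₁` and the other in `S₂`. -/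
noncomputable def cutBetween (G : SimpleGraph V) (S₁ S₂ : Finset V) : Finset (Sym2 V) :=
  G.edgeFinset.filter (fun e => ∃ u v, e = s(u, v) ∧ u ∈ S₁ ∧ v ∈ S₂)

/-- The cut `δ(S)`: edges of `G` with exactly one endpoint in `S`. -/
noncomputable def cut (G : SimpleGraph V) (S : Finset V) : Finset (Sym2 V) :=
  cutBetween G S Sᶜ

/-- `E(S)`: edges of `G` with both endpoints in `S`. -/
noncomputable def inducedEdges (G : SimpleGraph V) (S : Finset V) : Finset (Sym2 V) :=
  G.edgeFinset.filter (fun e => ∀ v ∈ e, v ∈ S)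

/-- `T` is the edge set of a spanning tree of `G`. -/
def IsSpanningTree (G : SimpleGraph V) (T : Finset (Sym2 V)) : Prop :=
  (T : Set (Sym2 V)) ⊆ G.edgeSet ∧ (SimpleGraph.fromEdgeSet (T : Set (Sym2 V))).IsTree

/-- Characteristic vector of a set of edges. -/
noncomputable def chi (T : Finset (Sym2 V)) : Sym2 V → ℝ :=
  fun e => if e ∈ T then 1 else 0

/-- The spanning tree polytope `Sp(G)`. -/
noncomputable def spanningTreePolytope (G : SimpleGraph V) : Set (Sym2 V → ℝ) :=
  convexHull ℝ {x | ∃ T : Finset (Sym2 V), IsSpanningTree G T ∧ x = chi T}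

/-- The level sets `L_i = V_i \ V_{i-1}` of a chain `V_0 ⊊ … ⊊ V_k` (with `V_{-1} = ∅`,
`V_{k+1} = V`). -/
noncomputable def level (Vc : ℕ → Finset V) (k : ℕ) : ℕ → Finset V :=
  fun i => if i = 0 then Vc 0 else if i ≤ k then Vc i \ Vc (i - 1) else Finset.univ \ Vc k

/-- `x` is a chain-point for the chain `V_0 ⊊ … ⊊ V_k`. -/
def IsChainPoint (G : SimpleGraph V) (Vc : ℕ → Finset V) (k : ℕ) (x : Sym2 V → ℝ) : Prop :=
  x ∈ spanningTreePolytope G ∧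
  (∑ e ∈ cut G (Vc 0), x e) = 1 ∧
  (∑ e ∈ cut G (Vc k), x e) = 1 ∧
  (∀ i, 1 ≤ i → i ≤ k - 1 → (∑ e ∈ cut G (Vc i), x e) < 2) ∧
  (∀ i, 1 ≤ i → i ≤ k →
    (∑ v ∈ level Vc k i, ∑ e ∈ cut G {v}, x e) = 2 * ((level Vc k i).card : ℝ))

/-- A Gao-tree for the chain `V_0 ⊊ … ⊊ V_k`: a spanning tree meeting each cut `δ(V_i)`
in exactly one edge. -/
def IsGaoTree (G : SimpleGraph V) (Vc : ℕ → Finset V) (k : ℕ) (T : Finset (Sym2 V)) : Prop :=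
  IsSpanningTree G T ∧ ∀ i ≤ k, (T ∩ cut G (Vc i)).card = 1

/-- A Gao-tree for the subchain of `V_0 ⊊ … ⊊ V_k` given by the index set `I`. -/
def IsGaoTreeOn (G : SimpleGraph V) (Vc : ℕ → Finset V) (I : Finset ℕ)
    (T : Finset (Sym2 V)) : Prop :=
  IsSpanningTree G T ∧ ∀ i ∈ I, (T ∩ cut G (Vc i)).card = 1

/-- `Sp_𝒞(G)`: the convex hull of characteristic vectors of Gao-trees. -/
noncomputable def gaoPolytope (G : SimpleGraph V) (Vc : ℕ → Finset V) (k : ℕ) :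
    Set (Sym2 V → ℝ) :=
  convexHull ℝ {x | ∃ T : Finset (Sym2 V), IsGaoTree G Vc k T ∧ x = chi T}

/-- `F` is the edge set of a spanning tree of the induced subgraph `G(U)`. -/
def IsSpanningTreeOfInduced (G : SimpleGraph V) (U : Finset V) (F : Finset (Sym2 V)) : Prop :=
  (F : Set (Sym2 V)) ⊆ G.edgeSet ∧ (∀ e ∈ F, ∀ v ∈ e, v ∈ U) ∧
  F.card = U.card - 1 ∧
  ∀ u ∈ U, ∀ v ∈ U, (SimpleGraph.fromEdgeSet (F : Set (Sym2 V))).Reachable u v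

/-- The rank of `X` in the cycle matroid of `G`. -/
noncomputable def cycleRank (G : SimpleGraph V) (X : Finset (Sym2 V)) : ℕ :=
  (G.edgeFinset.powerset.filter (fun T => IsSpanningTree G T)).sup (fun T => (T ∩ X).card)

/-- The rank of `X` in the matroid whose bases are the Gao-trees. -/
noncomputable def gaoRank (G : SimpleGraph V) (Vc : ℕ → Finset V) (k : ℕ)
    (X : Finset (Sym2 V)) : ℕ :=
  (G.edgeFinset.powerset.filter (fun T => IsGaoTree G Vc k T)).sup (fun T => (T ∩ X).card)

/-- `x` is a solution of the `s`–`t` path TSP subtour elimination LP. -/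
def IsSubtourLPSolution (G : SimpleGraph V) (s t : V) (x : Sym2 V → ℝ) : Prop :=
  x ∈ spanningTreePolytope G ∧
  (∀ v, v ≠ s → v ≠ t → (∑ e ∈ cut G {v}, x e) = 2) ∧
  (∑ e ∈ cut G {s}, x e) = 1 ∧ (∑ e ∈ cut G {t}, x e) = 1

/-- Rank function of a matroid on a finite ground set, as a function on finsets. -/
noncomputable def mrank {E : Type*} [Fintype E] (M : Matroid E) (X : Finset E) : ℕ :=
  (X.powerset.filter (fun I : Finset E => M.Indep (I : Set E))).sup Finset.card

/-- Convex hull of characteristic vectors of independent sets of a matroid. -/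
noncomputable def indepPolytope {E : Type*} [Fintype E] (M : Matroid E) : Set (E → ℝ) :=
  convexHull ℝ {x | ∃ I : Finset E, M.Indep (I : Set E) ∧
    x = fun e => if e ∈ I then (1 : ℝ) else 0}

lemma acyclic_mono {H K : SimpleGraph V} (h : H ≤ K) (hK : K.IsAcyclic) : H.IsAcyclic :=
  fun _ c hc => hK (c.mapLe h) (hc.mapLe h)

lemma reach_insert_edge {F : Set (Sym2 V)} {u v : V} (huv : u ≠ v) {a b : V}
    (h : (SimpleGraph.fromEdgeSet (insert s(u,v) F)).Reachable a b) :
    (SimpleGraph.fromEdgeSet F).Reachable a b ∨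
    ((SimpleGraph.fromEdgeSet F).Reachable a u ∧ (SimpleGraph.fromEdgeSet F).Reachable v b) ∨
    ((SimpleGraph.fromEdgeSet F).Reachable a v ∧ (SimpleGraph.fromEdgeSet F).Reachable u b) := by
  obtain ⟨w⟩ := h
  induction w with
  | nil => exact Or.inl (SimpleGraph.Reachable.refl _)
  | @cons p q r hadj w ih =>
    rw [SimpleGraph.fromEdgeSet_adj, Set.mem_insert_iff] at hadj
    obtain ⟨he | hF, hne⟩ := hadj
    · rw [Sym2.eq_iff] at he
      rcases he with ⟨rfl, rfl⟩ | ⟨rfl, rfl⟩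
      · -- p = u, q = v
        rcases ih with h1 | ⟨h1, h2⟩ | ⟨h1, h2⟩
        · exact Or.inr (Or.inl ⟨SimpleGraph.Reachable.refl _, h1⟩)
        · exact Or.inr (Or.inl ⟨SimpleGraph.Reachable.refl _, h2⟩)
        · exact Or.inl h2
      · -- p = v, q = u
        rcases ih with h1 | ⟨h1, h2⟩ | ⟨h1, h2⟩
        · exact Or.inr (Or.inr ⟨SimpleGraph.Reachable.refl _, h1⟩)
        · exact Or.inl h2
        · exact Or.inr (Or.inr ⟨SimpleGraph.Reachable.refl _, h2⟩)
    · have hpq : (SimpleGraph.fromEdgeSet F).Reachable p q :=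
        SimpleGraph.Adj.reachable (by rw [SimpleGraph.fromEdgeSet_adj]; exact ⟨hF, hne⟩)
      rcases ih with h1 | ⟨h1, h2⟩ | ⟨h1, h2⟩
      · exact Or.inl (hpq.trans h1)
      · exact Or.inr (Or.inl ⟨hpq.trans h1, h2⟩)
      · exact Or.inr (Or.inr ⟨hpq.trans h1, h2⟩)

noncomputable def clG (H : SimpleGraph V) (W : Finset V) (v : V) : Finset V :=
  W.filter (fun w => H.Reachable v w)

lemma mem_clG {H : SimpleGraph V} {W : Finset V} {a b : V} :
    b ∈ clG H W a ↔ b ∈ W ∧ H.Reachable a b := by simp [clG]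

lemma clG_congr {H : SimpleGraph V} {W : Finset V} {a b : V} (h : H.Reachable a b) :
    clG H W a = clG H W b := by
  ext z; simp only [mem_clG]
  exact and_congr_right fun _ => ⟨fun hz => h.symm.trans hz, fun hz => h.trans hz⟩

lemma reach_of_clG_eq {H : SimpleGraph V} {W : Finset V} {a b : V} (hb : b ∈ W)
    (h : clG H W a = clG H W b) : H.Reachable a b := by
  have hbb : b ∈ clG H W b := mem_clG.2 ⟨hb, SimpleGraph.Reachable.refl b⟩
  rw [← h] at hbb; exact (mem_clG.1 hbb).2
lemma image_cl_insert (F' : Finset (Sym2 V)) (u v : V) (huv : u ≠ v)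
    (he : s(u,v) ∉ F') (W : Finset V) (hu : u ∈ W) (hv : v ∈ W)
    (hac : (SimpleGraph.fromEdgeSet (↑(insert s(u,v) F') : Set (Sym2 V))).IsAcyclic) :
    (W.image (clG (SimpleGraph.fromEdgeSet (↑(insert s(u,v) F') : Set (Sym2 V))) W)).card + 1
      = (W.image (clG (SimpleGraph.fromEdgeSet (↑F' : Set (Sym2 V))) W)).card := by
  set G1 := SimpleGraph.fromEdgeSet (↑F' : Set (Sym2 V)) with hG1
  set G2 := SimpleGraph.fromEdgeSet (↑(insert s(u,v) F') : Set (Sym2 V)) with hG2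
  have hcoe : (↑(insert s(u,v) F') : Set (Sym2 V)) = insert s(u,v) (↑F' : Set (Sym2 V)) := by
    simp
  have hle : G1 ≤ G2 := by
    rw [hG1, hG2, hcoe]; exact SimpleGraph.fromEdgeSet_mono (Set.subset_insert _ _)
  have hadj2 : G2.Adj u v := by
    rw [hG2, SimpleGraph.fromEdgeSet_adj, hcoe]; exact ⟨Set.mem_insert _ _, huv⟩
  have hR2 : ∀ a b : V, G2.Reachable a b ↔ (G1.Reachable a b ∨
      (G1.Reachable a u ∧ G1.Reachable v b) ∨ (G1.Reachable a v ∧ G1.Reachable u b)) := by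
    intro a b
    constructor
    · intro h; rw [hG2, hcoe] at h; exact reach_insert_edge huv h
    · rintro (h | ⟨h1, h2⟩ | ⟨h1, h2⟩)
      · exact h.mono hle
      · exact ((h1.mono hle).trans hadj2.reachable).trans (h2.mono hle)
      · exact ((h1.mono hle).trans hadj2.symm.reachable).trans (h2.mono hle)
  have hnRuv : ¬ G1.Reachable u v := by
    have hbr := (SimpleGraph.isAcyclic_iff_forall_adj_isBridge.mp hac) hadj2
    rw [SimpleGraph.isBridge_iff] at hbr
    refine fun h => hbr (h.mono ?_)
    intro a b hab
    rw [SimpleGraph.deleteEdges_adj]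
    refine ⟨hle hab, ?_⟩
    intro hm
    rw [Set.mem_singleton_iff] at hm
    rw [hG1, SimpleGraph.fromEdgeSet_adj] at hab
    exact he (by rw [← hm]; exact hab.1)
  set c1 := clG G1 W with hc1
  set c2 := clG G2 W with hc2
  have hc2v : c2 v = c2 u := clG_congr hadj2.symm.reachable
  have hc2_eq_c1 : ∀ w, ¬G1.Reachable w u → ¬G1.Reachable w v → c2 w = c1 w := by
    intro w h1 h2; ext z; simp only [hc1, hc2, mem_clG]
    refine and_congr_right fun _ => ⟨fun h => ?_, fun h => h.mono hle⟩
    rcases (hR2 w z).1 h with h | ⟨ha, -⟩ | ⟨ha, -⟩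
    · exact h
    · exact absurd ha h1
    · exact absurd ha h2
  have hc1uv : c1 u ≠ c1 v := fun h => hnRuv (reach_of_clG_eq hv h)
  have hA2 : W.image c2 = insert (c2 u) (((W.image c1).erase (c1 u)).erase (c1 v)) := by
    ext s; simp only [mem_image, mem_insert, mem_erase]
    constructor
    · rintro ⟨w, hw, rfl⟩
      by_cases h1 : G1.Reachable w u
      · exact Or.inl (clG_congr (h1.mono hle))
      by_cases h2 : G1.Reachable w v
      · exact Or.inl ((clG_congr (h2.mono hle)).trans hc2v)
      · have hcw : c2 w = c1 w := hc2_eq_c1 w h1 h2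
        refine Or.inr ⟨?_, ?_, w, hw, hcw.symm⟩
        · rw [hcw]; exact fun h => h2 (reach_of_clG_eq hv h)
        · rw [hcw]; exact fun h => h1 (reach_of_clG_eq hu h)
    · rintro (rfl | ⟨hnv, hnu, w, hw, rfl⟩)
      · exact ⟨u, hu, rfl⟩
      · have h1 : ¬G1.Reachable w u := fun h => hnu (clG_congr h)
        have h2 : ¬G1.Reachable w v := fun h => hnv (clG_congr h)
        exact ⟨w, hw, hc2_eq_c1 w h1 h2⟩
  have hc2u_not : c2 u ∉ ((W.image c1).erase (c1 u)).erase (c1 v) := by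
    simp only [mem_erase, mem_image]
    rintro ⟨hnv, hnu, w, hw, hww⟩
    have huu : u ∈ c2 u := mem_clG.2 ⟨hu, SimpleGraph.Reachable.refl u⟩
    rw [← hww] at huu
    exact hnu (hww.symm.trans (show c1 w = c1 u from clG_congr (mem_clG.1 huu).2))
  have hu_mem : c1 u ∈ W.image c1 := mem_image_of_mem _ hu
  have hv_mem : c1 v ∈ (W.image c1).erase (c1 u) :=
    mem_erase.2 ⟨fun h => hc1uv h.symm, mem_image_of_mem _ hv⟩
  have h2le : 2 ≤ (W.image c1).card :=
    Finset.one_lt_card.2 ⟨c1 u, hu_mem, c1 v, mem_image_of_mem _ hv, hc1uv⟩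
  rw [hA2, card_insert_of_notMem hc2u_not, card_erase_of_mem hv_mem,
    card_erase_of_mem hu_mem]
  omega
lemma forest_count (W : Finset V) (F : Finset (Sym2 V))
    (hnd : ∀ e ∈ F, ¬ e.IsDiag)
    (hac : (SimpleGraph.fromEdgeSet (↑F : Set (Sym2 V))).IsAcyclic)
    (hW : ∀ e ∈ F, ∀ x ∈ e, x ∈ W) :
    F.card + (W.image (clG (SimpleGraph.fromEdgeSet (↑F : Set (Sym2 V))) W)).card = W.card := by
  induction F using Finset.induction_on with
  | empty =>
    simp only [card_empty, zero_add]
    rw [card_image_of_injOn]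
    intro a ha b hb h
    have hr := reach_of_clG_eq hb h
    rw [Finset.coe_empty, SimpleGraph.fromEdgeSet_empty] at hr
    obtain ⟨w⟩ := hr
    cases w with
    | nil => rfl
    | cons h _ => exact absurd h (by simp)
  | @insert e F' he ih =>
    revert he
    induction e using Sym2.ind with | _ u v =>
    intro he
    have hndm : ∀ e ∈ F', ¬ e.IsDiag := fun e h => hnd e (mem_insert_of_mem h)
    have hWm : ∀ e ∈ F', ∀ x ∈ e, x ∈ W := fun e h => hW e (mem_insert_of_mem h)
    have hsub : (↑F' : Set (Sym2 V)) ⊆ (↑(insert s(u,v) F') : Set (Sym2 V)) := by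
      simp only [Finset.coe_insert]; exact Set.subset_insert _ _
    have hacm : (SimpleGraph.fromEdgeSet (↑F' : Set (Sym2 V))).IsAcyclic :=
      acyclic_mono (SimpleGraph.fromEdgeSet_mono hsub) hac
    have huv : u ≠ v := by
      have := hnd _ (mem_insert_self s(u,v) F')
      simpa [Sym2.mk_isDiag_iff] using this
    have hu : u ∈ W := hW _ (mem_insert_self _ _) u (Sym2.mem_mk_left u v)
    have hv : v ∈ W := hW _ (mem_insert_self _ _) v (Sym2.mem_mk_right u v)
    have hkey := image_cl_insert F' u v huv he W hu hv hac
    have hIH := ih hndm hacm hWm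
    rw [card_insert_of_notMem he]
    omega
lemma forest_card_add_one_le (W : Finset V) (hWne : W.Nonempty) (F : Finset (Sym2 V))
    (hnd : ∀ e ∈ F, ¬ e.IsDiag)
    (hac : (SimpleGraph.fromEdgeSet (↑F : Set (Sym2 V))).IsAcyclic)
    (hW : ∀ e ∈ F, ∀ x ∈ e, x ∈ W) :
    F.card + 1 ≤ W.card := by
  have h := forest_count W F hnd hac hW
  have : (W.image (clG (SimpleGraph.fromEdgeSet (↑F : Set (Sym2 V))) W)).Nonempty :=
    hWne.image _
  have := Finset.card_pos.2 this
  omega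

lemma forest_reachable (W : Finset V) (F : Finset (Sym2 V))
    (hnd : ∀ e ∈ F, ¬ e.IsDiag)
    (hac : (SimpleGraph.fromEdgeSet (↑F : Set (Sym2 V))).IsAcyclic)
    (hW : ∀ e ∈ F, ∀ x ∈ e, x ∈ W)
    (hcard : W.card ≤ F.card + 1) :
    ∀ u ∈ W, ∀ v ∈ W, (SimpleGraph.fromEdgeSet (↑F : Set (Sym2 V))).Reachable u v := by
  intro u hu v hv
  have h := forest_count W F hnd hac hW
  set H := SimpleGraph.fromEdgeSet (↑F : Set (Sym2 V))
  have h1 : (W.image (clG H W)).card ≤ 1 := by omega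
  have hcu : clG H W u ∈ W.image (clG H W) := mem_image_of_mem _ hu
  have hcv : clG H W v ∈ W.image (clG H W) := mem_image_of_mem _ hv
  have : clG H W u = clG H W v := by
    by_contra hne
    exact absurd (Finset.one_lt_card.2 ⟨_, hcu, _, hcv, hne⟩) (by omega)
  exact reach_of_clG_eq hv this
set_option linter.unusedSectionVars false

lemma spanningTree_not_isDiag {G : SimpleGraph V} {T : Finset (Sym2 V)}
    (hT : IsSpanningTree G T) : ∀ e ∈ T, ¬ e.IsDiag :=
  fun _ heT => G.not_isDiag_of_mem_edgeSet (hT.1 heT)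

lemma spanningTree_acyclic {G : SimpleGraph V} {T : Finset (Sym2 V)}
    (hT : IsSpanningTree G T) : (SimpleGraph.fromEdgeSet (↑T : Set (Sym2 V))).IsAcyclic :=
  ((SimpleGraph.isTree_iff _).mp hT.2).2

lemma spanningTree_edgeSet {G : SimpleGraph V} {T : Finset (Sym2 V)}
    (hT : IsSpanningTree G T) :
    (SimpleGraph.fromEdgeSet (↑T : Set (Sym2 V))).edgeSet = (↑T : Set (Sym2 V)) := by
  rw [SimpleGraph.edgeSet_fromEdgeSet]
  ext e
  simp only [Set.mem_diff, Set.mem_setOf_eq, Finset.mem_coe, and_iff_left_iff_imp]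
  exact fun he => spanningTree_not_isDiag hT e he

lemma spanningTree_card {G : SimpleGraph V} {T : Finset (Sym2 V)}
    (hT : IsSpanningTree G T) : T.card + 1 = Fintype.card V := by
  have h := SimpleGraph.IsTree.card_edgeFinset hT.2
  rw [SimpleGraph.edgeFinset, Set.toFinset_congr (spanningTree_edgeSet hT)] at h
  simpa using h

lemma tree_inter_bound {G : SimpleGraph V} {T : Finset (Sym2 V)}
    (hT : IsSpanningTree G T) (W : Finset V) (hWne : W.Nonempty)
    (F : Finset (Sym2 V)) (hFT : F ⊆ T) (hFW : ∀ e ∈ F, ∀ x ∈ e, x ∈ W) :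
    F.card + 1 ≤ W.card :=
  forest_card_add_one_le W hWne F (fun e h => spanningTree_not_isDiag hT e (hFT h))
    (acyclic_mono (SimpleGraph.fromEdgeSet_mono (Finset.coe_subset.2 hFT))
      (spanningTree_acyclic hT)) hFW

lemma exists_decomp {G : SimpleGraph V} {x : Sym2 V → ℝ} (hx : x ∈ spanningTreePolytope G) :
    ∃ (ι : Type) (t : Finset ι) (w : ι → ℝ) (Tr : ι → Finset (Sym2 V)),
      (∀ i ∈ t, 0 ≤ w i) ∧ (∑ i ∈ t, w i) = 1 ∧ (∀ i ∈ t, IsSpanningTree G (Tr i)) ∧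
      (∀ e, x e = ∑ i ∈ t, w i * (if e ∈ Tr i then 1 else 0)) := by
  rw [spanningTreePolytope, _root_.convexHull_eq] at hx
  obtain ⟨ι, t, w, z, hw0, hw1, hz, hcm⟩ := hx
  have hTr : ∀ i, ∃ T : Finset (Sym2 V), i ∈ t → (IsSpanningTree G T ∧ z i = chi T) := by
    intro i
    by_cases h : i ∈ t
    · obtain ⟨T, hT, hzT⟩ := hz i h
      exact ⟨T, fun _ => ⟨hT, hzT⟩⟩
    · exact ⟨∅, fun h' => absurd h' h⟩
  choose Tr hTr using hTr
  refine ⟨ι, t, w, Tr, hw0, hw1, fun i hi => (hTr i hi).1, fun e => ?_⟩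
  rw [Finset.centerMass_eq_of_sum_1 _ _ hw1] at hcm
  rw [← hcm, Finset.sum_apply]
  refine Finset.sum_congr rfl fun i hi => ?_
  rw [Pi.smul_apply, (hTr i hi).2, smul_eq_mul]
  rfl

lemma sum_decomp {x : Sym2 V → ℝ} {ι : Type} {t : Finset ι} {w : ι → ℝ}
    {Tr : ι → Finset (Sym2 V)}
    (hxeq : ∀ e, x e = ∑ i ∈ t, w i * (if e ∈ Tr i then 1 else 0))
    (F : Finset (Sym2 V)) :
    ∑ e ∈ F, x e = ∑ i ∈ t, w i * ((Tr i ∩ F).card : ℝ) := by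
  have : ∑ e ∈ F, x e = ∑ e ∈ F, ∑ i ∈ t, w i * (if e ∈ Tr i then 1 else 0) :=
    Finset.sum_congr rfl fun e _ => hxeq e
  rw [this, Finset.sum_comm]
  refine Finset.sum_congr rfl fun i _ => ?_
  rw [← Finset.mul_sum]
  congr 1
  rw [Finset.sum_boole, Finset.filter_mem_eq_inter, Finset.inter_comm]

lemma x_nonneg {x : Sym2 V → ℝ} {ι : Type} {t : Finset ι} {w : ι → ℝ}
    {Tr : ι → Finset (Sym2 V)} (hw0 : ∀ i ∈ t, 0 ≤ w i)
    (hxeq : ∀ e, x e = ∑ i ∈ t, w i * (if e ∈ Tr i then 1 else 0)) :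
    ∀ e, 0 ≤ x e := by
  intro e
  rw [hxeq e]
  refine Finset.sum_nonneg fun i hi => mul_nonneg (hw0 i hi) ?_
  by_cases h : e ∈ Tr i <;> simp [h]

lemma cut_singleton (G : SimpleGraph V) (v : V) :
    cut G {v} = G.edgeFinset.filter (fun e => v ∈ e) := by
  ext e
  simp only [cut, cutBetween, Finset.mem_filter, Finset.mem_singleton, Finset.mem_compl,
    and_congr_right_iff]
  intro he
  constructor
  · rintro ⟨u, w, rfl, rfl, -⟩
    exact Sym2.mem_mk_left _ _
  · intro hv
    obtain ⟨w, rfl⟩ := Sym2.mem_iff_exists.1 hv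
    have hvw : v ≠ w := by
      have := G.not_isDiag_of_mem_edgeSet (SimpleGraph.mem_edgeFinset.1 he)
      simpa [Sym2.mk_isDiag_iff] using this
    exact ⟨v, w, rfl, rfl, fun h => hvw h.symm⟩

lemma mem_cut_iff (G : SimpleGraph V) (W : Finset V) {a b : V}
    (hab : s(a,b) ∈ G.edgeFinset) :
    s(a,b) ∈ cut G W ↔ ((a ∈ W ∧ b ∉ W) ∨ (b ∈ W ∧ a ∉ W)) := by
  simp only [cut, cutBetween, Finset.mem_filter, hab, true_and, Finset.mem_compl]
  constructor
  · rintro ⟨u, w, hE, hu, hw⟩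
    rw [Sym2.eq_iff] at hE
    rcases hE with ⟨rfl, rfl⟩ | ⟨rfl, rfl⟩
    · exact Or.inl ⟨hu, hw⟩
    · exact Or.inr ⟨hu, hw⟩
  · rintro (⟨h1, h2⟩ | ⟨h1, h2⟩)
    · exact ⟨a, b, rfl, h1, h2⟩
    · exact ⟨b, a, Sym2.eq_swap, h1, h2⟩

lemma mem_induced_iff (G : SimpleGraph V) (W : Finset V) {a b : V}
    (hab : s(a,b) ∈ G.edgeFinset) :
    s(a,b) ∈ inducedEdges G W ↔ (a ∈ W ∧ b ∈ W) := by
  simp only [inducedEdges, Finset.mem_filter, hab, true_and, Sym2.ball]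

lemma handshake (G : SimpleGraph V) (x : Sym2 V → ℝ) (W : Finset V) :
    ∑ v ∈ W, ∑ e ∈ cut G {v}, x e
      = 2 * (∑ e ∈ inducedEdges G W, x e) + ∑ e ∈ cut G W, x e := by
  have h1 : ∀ v : V, ∑ e ∈ cut G {v}, x e
      = ∑ e ∈ G.edgeFinset, if v ∈ e then x e else 0 := by
    intro v; rw [cut_singleton, Finset.sum_filter]
  have h2 : ∑ e ∈ inducedEdges G W, x e
      = ∑ e ∈ G.edgeFinset, if e ∈ inducedEdges G W then x e else 0 := by
    rw [Finset.sum_ite_mem]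
    congr 1
    exact (Finset.inter_eq_right.2 (Finset.filter_subset _ _ : inducedEdges G W ⊆ _)).symm
  have h3 : ∑ e ∈ cut G W, x e
      = ∑ e ∈ G.edgeFinset, if e ∈ cut G W then x e else 0 := by
    rw [Finset.sum_ite_mem]
    congr 1
    exact (Finset.inter_eq_right.2 (Finset.filter_subset _ _ : cut G W ⊆ _)).symm
  simp_rw [h1]
  rw [Finset.sum_comm, h2, h3, Finset.mul_sum, ← Finset.sum_add_distrib]
  refine Finset.sum_congr rfl fun e he => ?_
  induction e using Sym2.ind with | _ p q =>
  have hpq : p ≠ q := by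
    have := G.not_isDiag_of_mem_edgeSet (SimpleGraph.mem_edgeFinset.1 he)
    simpa [Sym2.mk_isDiag_iff] using this
  have hL : ∑ v ∈ W, (if v ∈ s(p,q) then x s(p,q) else 0)
      = (if p ∈ W then x s(p,q) else 0) + (if q ∈ W then x s(p,q) else 0) := by
    have : ∀ v : V, (if v ∈ s(p,q) then x s(p,q) else 0)
        = (if v = p then x s(p,q) else 0) + (if v = q then x s(p,q) else 0) := by
      intro v
      simp only [Sym2.mem_iff]
      by_cases h1 : v = p <;> by_cases h2 : v = q <;>
        simp_all [hpq]
    simp_rw [this]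
    rw [Finset.sum_add_distrib, Finset.sum_ite_eq' W p (fun _ => x s(p,q)),
      Finset.sum_ite_eq' W q (fun _ => x s(p,q))]
  rw [hL]
  simp only [mem_cut_iff G W he, mem_induced_iff G W he]
  by_cases h1 : p ∈ W <;> by_cases h2 : q ∈ W <;> simp [h1, h2] <;> ring

section Levels
variable {Vc : ℕ → Finset V} {k : ℕ}

lemma Vc_mono (hchain : ∀ i < k, Vc i ⊂ Vc (i + 1)) :
    ∀ {i j : ℕ}, i ≤ j → j ≤ k → Vc i ⊆ Vc j := by
  intro i j hij hjk
  induction hij with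
  | refl => exact subset_rfl
  | @step m h ih =>
    exact (ih (by omega)).trans (hchain m (by omega)).subset

lemma level_zero : level Vc k 0 = Vc 0 := by simp [level]

lemma level_subset {i : ℕ} (h : i ≤ k) : level Vc k i ⊆ Vc i := by
  by_cases h0 : i = 0
  · subst h0; simp [level]
  · simp only [level, h0, if_false, h, if_true]
    exact Finset.sdiff_subset

lemma level_disjoint_Vc {i : ℕ} (h1 : 1 ≤ i) (h2 : i ≤ k + 1) :
    Disjoint (level Vc k i) (Vc (i - 1)) := by
  by_cases h : i ≤ k
  · have h0 : i ≠ 0 := by omega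
    simp only [level, h0, if_false, h, if_true]
    exact Finset.sdiff_disjoint
  · have hik : i = k + 1 := by omega
    have h0 : i ≠ 0 := by omega
    simp only [level, h0, if_false, h, if_true]
    have : i - 1 = k := by omega
    rw [this]
    exact Finset.sdiff_disjoint

lemma level_top : level Vc k (k + 1) = Finset.univ \ Vc k := by
  simp [level]

lemma biUnion_levels (hchain : ∀ i < k, Vc i ⊂ Vc (i + 1)) :
    ∀ m, m ≤ k → (Finset.Icc 0 m).biUnion (level Vc k) = Vc m := by
  intro m
  induction m with
  | zero => intro _; simp [level_zero]
  | succ m ih =>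
    intro hm
    have hIcc : Finset.Icc 0 (m + 1) = insert (m + 1) (Finset.Icc 0 m) := by
      ext j; simp only [Finset.mem_Icc, Finset.mem_insert]; omega
    rw [hIcc, Finset.biUnion_insert, ih (by omega)]
    have hlev : level Vc k (m + 1) = Vc (m + 1) \ Vc m := by
      simp only [level, Nat.succ_ne_zero, if_false, hm, if_true]
      congr 1
    rw [hlev]
    exact Finset.sdiff_union_of_subset (hchain m (by omega)).subset

lemma biUnion_levels_all (hchain : ∀ i < k, Vc i ⊂ Vc (i + 1)) :
    (Finset.Icc 0 (k + 1)).biUnion (level Vc k) = Finset.univ := by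
  have hIcc : Finset.Icc 0 (k + 1) = insert (k + 1) (Finset.Icc 0 k) := by
    ext j; simp only [Finset.mem_Icc, Finset.mem_insert]; omega
  rw [hIcc, Finset.biUnion_insert, biUnion_levels hchain k le_rfl, level_top]
  exact Finset.sdiff_union_of_subset (Finset.subset_univ _)

lemma levels_disjoint (hchain : ∀ i < k, Vc i ⊂ Vc (i + 1)) {i j : ℕ}
    (hij : i < j) (hjk : j ≤ k + 1) : Disjoint (level Vc k i) (level Vc k j) := by
  have h1 : level Vc k i ⊆ Vc (j - 1) := by
    refine (level_subset (by omega)).trans (Vc_mono hchain (by omega) (by omega))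
  exact ((level_disjoint_Vc (by omega) hjk).mono_right h1).symm

lemma level_nonempty (hne : (Vc 0).Nonempty) (hchain : ∀ i < k, Vc i ⊂ Vc (i + 1))
    (htop : Vc k ⊂ Finset.univ) {i : ℕ} (hik : i ≤ k + 1) :
    (level Vc k i).Nonempty := by
  by_cases h0 : i = 0
  · subst h0; rw [level_zero]; exact hne
  by_cases h : i ≤ k
  · simp only [level, h0, if_false, h, if_true]
    obtain ⟨y, hy1, hy2⟩ := Finset.exists_of_ssubset
      (by simpa [Nat.sub_add_cancel (by omega : 1 ≤ i)] using hchain (i-1) (by omega))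
    exact ⟨y, Finset.mem_sdiff.2 ⟨hy1, hy2⟩⟩
  · have : i = k + 1 := by omega
    subst this
    rw [level_top]
    obtain ⟨y, hy1, hy2⟩ := Finset.exists_of_ssubset htop
    exact ⟨y, Finset.mem_sdiff.2 ⟨hy1, hy2⟩⟩

end Levels

lemma cut_sdiff_univ (G : SimpleGraph V) (W : Finset V) :
    cut G (Finset.univ \ W) = cut G W := by
  ext e
  simp only [cut, cutBetween, Finset.mem_filter, and_congr_right_iff, Finset.mem_compl,
    Finset.mem_sdiff, Finset.mem_univ, true_and]
  intro he
  constructor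
  · rintro ⟨u, v, rfl, hu, hv⟩
    push_neg at hv
    exact ⟨v, u, Sym2.eq_swap, hv, hu⟩
  · rintro ⟨u, v, rfl, hu, hv⟩
    exact ⟨v, u, Sym2.eq_swap, hv, fun h => h hu⟩

lemma cut_univ_empty (G : SimpleGraph V) : cut G (Finset.univ : Finset V) = ∅ := by
  ext e
  simp [cut, cutBetween]

lemma inducedEdges_univ (G : SimpleGraph V) :
    inducedEdges G (Finset.univ : Finset V) = G.edgeFinset := by
  simp [inducedEdges]

theorem stmt6 (G : SimpleGraph V) (hG : G.Connected)
    (Vc : ℕ → Finset V) (k : ℕ)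
    (hne : (Vc 0).Nonempty) (hchain : ∀ i < k, Vc i ⊂ Vc (i + 1))
    (htop : Vc k ⊂ Finset.univ)
    (x : Sym2 V → ℝ) (hx : IsChainPoint G Vc k x)
    (U : Finset V) (hU : (∑ e ∈ inducedEdges G U, x e) = (U.card : ℝ) - 1)
    (a b : ℕ) (hab : a ≤ b) (hb : b ≤ k + 1)
    (S : Finset V) (hS : S = (Finset.Icc a b).biUnion (level Vc k)) :
    (∃ T : Finset (Sym2 V), IsSpanningTree G T ∧ (∀ e ∈ T, 0 < x e) ∧
      IsSpanningTreeOfInduced G (S ∩ U) (T ∩ inducedEdges G (S ∩ U))) ∧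
    ∀ u ∈ S ∩ U, ∀ v ∈ S ∩ U,
      (SimpleGraph.fromEdgeSet
        {e : Sym2 V | e ∈ inducedEdges G (S ∩ U) ∧ 0 < x e}).Reachable u v := by
  classical
  obtain ⟨hxP, hcut0, hcutk, hcutmid, hlevels⟩ := hx
  obtain ⟨ι, t, w, Tr, hw0, hw1, hTr, hxeq⟩ := exists_decomp hxP
  set n := Fintype.card V with hn
  set L := level Vc k with hLdef
  have hxnn : ∀ e, 0 ≤ x e := x_nonneg hw0 hxeq
  have hsum_nn : ∀ F : Finset (Sym2 V), 0 ≤ ∑ e ∈ F, x e :=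
    fun F => Finset.sum_nonneg fun e _ => hxnn e
  have hUne : U.Nonempty := by
    rw [Finset.nonempty_iff_ne_empty]
    rintro rfl
    rw [Finset.card_empty] at hU
    have := hsum_nn (inducedEdges G ∅)
    rw [hU] at this
    norm_num at this
  have htb : ∀ i ∈ t, ∀ W : Finset V, W.Nonempty →
      (Tr i ∩ inducedEdges G W).card + 1 ≤ W.card := by
    intro i hi W hW
    refine tree_inter_bound (hTr i hi) W hW _ Finset.inter_subset_left ?_
    intro e he v hv
    exact (Finset.mem_filter.1 (Finset.mem_of_mem_inter_right he)).2 v hv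
  have hsum : ∀ F : Finset (Sym2 V),
      ∑ e ∈ F, x e = ∑ i ∈ t, w i * ((Tr i ∩ F).card : ℝ) := sum_decomp hxeq
  have hTr_sub : ∀ i ∈ t, Tr i ⊆ G.edgeFinset := by
    intro i hi e he; exact SimpleGraph.mem_edgeFinset.2 ((hTr i hi).1 he)
  have hxtotal : ∑ e ∈ G.edgeFinset, x e = (n : ℝ) - 1 := by
    rw [hsum]
    have heq : ∀ i ∈ t, w i * ((Tr i ∩ G.edgeFinset).card : ℝ) = w i * ((n : ℝ) - 1) := by
      intro i hi
      rw [Finset.inter_eq_left.2 (hTr_sub i hi)]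
      have hc := spanningTree_card (hTr i hi)
      have : ((Tr i).card : ℝ) = (n : ℝ) - 1 := by
        rw [eq_sub_iff_add_eq]; exact_mod_cast hc
      rw [this]
    rw [Finset.sum_congr rfl heq, ← Finset.sum_mul, hw1, one_mul]
  -- per-vertex-set upper bound
  have hE_le : ∀ W : Finset V, W.Nonempty →
      ∑ e ∈ inducedEdges G W, x e ≤ (W.card : ℝ) - 1 := by
    intro W hW
    rw [hsum]
    have : ∀ i ∈ t, w i * ((Tr i ∩ inducedEdges G W).card : ℝ) ≤ w i * ((W.card : ℝ) - 1) := by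
      intro i hi
      refine mul_le_mul_of_nonneg_left ?_ (hw0 i hi)
      have := htb i hi W hW
      have : ((Tr i ∩ inducedEdges G W).card : ℝ) + 1 ≤ (W.card : ℝ) := by exact_mod_cast this
      linarith
    calc ∑ i ∈ t, w i * ((Tr i ∩ inducedEdges G W).card : ℝ)
        ≤ ∑ i ∈ t, w i * ((W.card : ℝ) - 1) := Finset.sum_le_sum this
      _ = (W.card : ℝ) - 1 := by rw [← Finset.sum_mul, hw1, one_mul]
  -- degree sums over levels
  set D : ℕ → ℝ := fun i => ∑ v ∈ L i, ∑ e ∈ cut G {v}, x e with hDdef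
  have hglobal : ∑ v ∈ Finset.univ, ∑ e ∈ cut G {v}, x e = 2 * ((n : ℝ) - 1) := by
    rw [handshake G x Finset.univ, cut_univ_empty, inducedEdges_univ, hxtotal]
    simp
  have hpd : ∀ I : Finset ℕ, I ⊆ Finset.Icc 0 (k+1) →
      (↑I : Set ℕ).Pairwise (Function.onFun Disjoint L) := by
    intro I hI i hi j hj hij
    rcases lt_or_gt_of_ne hij with h | h
    · exact levels_disjoint hchain h
        (Finset.mem_Icc.1 (hI (Finset.mem_coe.1 hj))).2
    · exact (levels_disjoint hchain h
        (Finset.mem_Icc.1 (hI (Finset.mem_coe.1 hi))).2).symm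
  have hDsum : ∑ i ∈ Finset.Icc 0 (k+1), D i = 2 * ((n : ℝ) - 1) := by
    rw [hDdef, ← Finset.sum_biUnion (hpd _ Finset.Subset.rfl)]
    rw [show (Finset.Icc 0 (k+1)).biUnion L = Finset.univ from
      (hLdef ▸ biUnion_levels_all hchain), hglobal]
  have hcardsum : ∑ i ∈ Finset.Icc 0 (k+1), ((L i).card : ℝ) = (n : ℝ) := by
    have := Finset.card_biUnion (fun i hi j hj hij => hpd _ Finset.Subset.rfl hi hj hij)
      (s := Finset.Icc 0 (k+1)) (t := L)
    rw [show (Finset.Icc 0 (k+1)).biUnion L = Finset.univ from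
      (hLdef ▸ biUnion_levels_all hchain), Finset.card_univ] at this
    rw [hn]
    exact_mod_cast this.symm
  have hsplit : ∀ f : ℕ → ℝ, ∑ i ∈ Finset.Icc 0 (k+1), f i
      = f 0 + (∑ i ∈ Finset.Icc 1 k, f i) + f (k+1) := by
    intro f
    have h1 : Finset.Icc 0 (k+1) = insert 0 (Finset.Icc 1 (k+1)) := by
      ext j; simp only [Finset.mem_Icc, Finset.mem_insert]; omega
    have h2 : Finset.Icc 1 (k+1) = insert (k+1) (Finset.Icc 1 k) := by
      ext j; simp only [Finset.mem_Icc, Finset.mem_insert]; omega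
    rw [h1, Finset.sum_insert (by simp), h2,
      Finset.sum_insert (by simp [Finset.mem_Icc])]
    ring
  have hD0 : D 0 = 2 * (∑ e ∈ inducedEdges G (Vc 0), x e) + 1 := by
    rw [hDdef]
    show ∑ v ∈ L 0, ∑ e ∈ cut G {v}, x e = _
    rw [hLdef, level_zero, handshake G x (Vc 0), hcut0]
  have hDtop : D (k+1) = 2 * (∑ e ∈ inducedEdges G (L (k+1)), x e) + 1 := by
    rw [hDdef]
    show ∑ v ∈ L (k+1), ∑ e ∈ cut G {v}, x e = _
    have hL' : L (k+1) = Finset.univ \ Vc k := by rw [hLdef]; exact level_top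
    rw [hL', handshake G x (Finset.univ \ Vc k), cut_sdiff_univ, hcutk]
  have hDmid : ∀ i ∈ Finset.Icc 1 k, D i = 2 * ((L i).card : ℝ) := by
    intro i hi
    rw [Finset.mem_Icc] at hi
    exact hlevels i hi.1 hi.2
  have hLtopne : (L (k+1)).Nonempty := hLdef ▸ level_nonempty hne hchain htop (le_refl _)
  have hE0_le := hE_le (Vc 0) hne
  have hEtop_le := hE_le (L (k+1)) hLtopne
  have hL0card : ((Vc 0).card : ℝ) = ((L 0).card : ℝ) := by rw [hLdef, level_zero]
  -- tightness at the two ends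
  have hends : (∑ e ∈ inducedEdges G (Vc 0), x e) = ((Vc 0).card : ℝ) - 1 ∧
      (∑ e ∈ inducedEdges G (L (k+1)), x e) = ((L (k+1)).card : ℝ) - 1 := by
    have e1 := hsplit D
    have e2 := hsplit (fun i => ((L i).card : ℝ))
    have e3 : ∑ i ∈ Finset.Icc 1 k, D i = ∑ i ∈ Finset.Icc 1 k, 2 * ((L i).card : ℝ) :=
      Finset.sum_congr rfl hDmid
    rw [hDsum] at e1
    rw [hcardsum] at e2
    rw [e3, ← Finset.mul_sum] at e1
    constructor <;> linarith [hE0_le, hEtop_le, e1, e2, hD0, hDtop, hL0card]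
  
  obtain ⟨hE0t, hEtopt⟩ := hends
  -- value of D on each index
  have hDval : ∀ i ∈ Finset.Icc a b, D i = 2 * ((L i).card : ℝ)
      - (if i = 0 then 1 else 0) - (if i = k + 1 then 1 else 0) := by
    intro i hi
    rw [Finset.mem_Icc] at hi
    by_cases h0 : i = 0
    · subst h0
      rw [hD0, hE0t, hL0card]
      rw [if_pos rfl, if_neg (by omega : ¬(0 : ℕ) = k + 1)]
      ring
    by_cases htp : i = k + 1
    · subst htp
      rw [hDtop, hEtopt]
      rw [if_neg (Nat.succ_ne_zero k), if_pos rfl]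
      ring
    · have h1k : 1 ≤ i ∧ i ≤ k := by omega
      rw [hDmid i (Finset.mem_Icc.2 h1k)]
      simp [h0, htp]
  -- sum of D over Icc a b
  have hScard : ((S.card : ℝ)) = ∑ i ∈ Finset.Icc a b, ((L i).card : ℝ) := by
    have hsub : Finset.Icc a b ⊆ Finset.Icc 0 (k+1) := by
      intro j hj; rw [Finset.mem_Icc] at *; omega
    have := Finset.card_biUnion
      (fun i hi j hj hij => hpd _ hsub hi hj hij) (s := Finset.Icc a b) (t := L)
    rw [hS, this]
    push_cast
    rfl
  have hSdeg : ∑ v ∈ S, ∑ e ∈ cut G {v}, x e = ∑ i ∈ Finset.Icc a b, D i := by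
    have hsub : Finset.Icc a b ⊆ Finset.Icc 0 (k+1) := by
      intro j hj; rw [Finset.mem_Icc] at *; omega
    rw [hS, Finset.sum_biUnion (hpd _ hsub)]
  set εa : ℝ := if a = 0 then 1 else 0 with hεa
  set εb : ℝ := if b = k + 1 then 1 else 0 with hεb
  have hDab : ∑ i ∈ Finset.Icc a b, D i
      = 2 * (S.card : ℝ) - εa - εb := by
    have ha' : ∑ i ∈ Finset.Icc a b, (if i = 0 then (1:ℝ) else 0) = εa := by
      rw [Finset.sum_ite_eq' (Finset.Icc a b) 0 (fun _ => (1:ℝ)), hεa]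
      by_cases h : a = 0
      · simp [h, Finset.mem_Icc]
      · have h0 : (0:ℕ) ∉ Finset.Icc a b := by rw [Finset.mem_Icc]; omega
        simp [h0, h]
    have hb' : ∑ i ∈ Finset.Icc a b, (if i = k + 1 then (1:ℝ) else 0) = εb := by
      rw [Finset.sum_ite_eq' (Finset.Icc a b) (k+1) (fun _ => (1:ℝ)), hεb]
      by_cases h : b = k + 1
      · have hm : k + 1 ∈ Finset.Icc a b := by rw [Finset.mem_Icc]; omega
        rw [if_pos hm, h, if_pos rfl]
      · have : k + 1 ∉ Finset.Icc a b := by rw [Finset.mem_Icc]; omega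
        simp [this, h]
    rw [Finset.sum_congr rfl hDval, Finset.sum_sub_distrib, Finset.sum_sub_distrib,
      ha', hb', hScard, Finset.mul_sum]
  
  set X : Finset (Sym2 V) := if a = 0 then ∅ else cut G (Vc (a-1)) with hX
  set Y : Finset (Sym2 V) := if b = k+1 then ∅ else cut G (Vc b) with hY
  have hmemS : ∀ v : V, v ∈ S ↔ ∃ i, a ≤ i ∧ i ≤ b ∧ v ∈ L i := by
    intro v; rw [hS, Finset.mem_biUnion]
    constructor
    · rintro ⟨i, hi, hv⟩; rw [Finset.mem_Icc] at hi; exact ⟨i, hi.1, hi.2, hv⟩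
    · rintro ⟨i, h1, h2, hv⟩; exact ⟨i, Finset.mem_Icc.2 ⟨h1, h2⟩, hv⟩
  have hlev_of_mem : ∀ v : V, ∃ j, j ≤ k + 1 ∧ v ∈ L j := by
    intro v
    have hv : v ∈ (Finset.Icc 0 (k+1)).biUnion L := by
      rw [hLdef, biUnion_levels_all hchain]; exact Finset.mem_univ v
    obtain ⟨j, hj, hv⟩ := Finset.mem_biUnion.1 hv
    exact ⟨j, (Finset.mem_Icc.1 hj).2, hv⟩
  have hcutS_sub : cut G S ⊆ X ∪ Y := by
    intro e he
    have heF : e ∈ G.edgeFinset := (Finset.mem_filter.1 he).1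
    obtain ⟨u, v, heq, huS, hvS⟩ := (Finset.mem_filter.1 he).2
    rw [Finset.mem_compl] at hvS
    obtain ⟨i, hai, hib, huL⟩ := (hmemS u).1 huS
    obtain ⟨j, hjk, hvL⟩ := hlev_of_mem v
    have hjab : j < a ∨ b < j := by
      by_contra hcon
      push_neg at hcon
      exact hvS ((hmemS v).2 ⟨j, hcon.1, hcon.2, hvL⟩)
    rcases hjab with hja | hbj
    · have ha0 : a ≠ 0 := by omega
      have hvVc : v ∈ Vc (a-1) :=
        (Vc_mono hchain (by omega : j ≤ a-1) (by omega)) (level_subset (by omega) hvL)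
      have huVc : u ∉ Vc (a-1) := by
        intro hc
        have hdisj := level_disjoint_Vc (Vc := Vc) (k := k) (by omega : 1 ≤ i) (by omega)
        have hui : u ∈ Vc (i-1) := Vc_mono hchain (by omega : a-1 ≤ i-1) (by omega) hc
        exact (Finset.disjoint_left.1 hdisj) huL hui
      refine Finset.mem_union_left _ ?_
      rw [hX, if_neg ha0]
      refine Finset.mem_filter.2 ⟨heF, v, u, ?_, hvVc, Finset.mem_compl.2 huVc⟩
      rw [heq]; exact Sym2.eq_swap
    · have hbk : b ≤ k := by omega
      have huVc : u ∈ Vc b := (Vc_mono hchain hib hbk) (level_subset (by omega) huL)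
      have hvVc : v ∉ Vc b := by
        intro hc
        have hdisj := level_disjoint_Vc (Vc := Vc) (k := k) (by omega : 1 ≤ j) (by omega)
        have hvj : v ∈ Vc (j-1) := Vc_mono hchain (by omega : b ≤ j-1) (by omega) hc
        exact (Finset.disjoint_left.1 hdisj) hvL hvj
      refine Finset.mem_union_right _ ?_
      rw [hY, if_neg (by omega : ¬ b = k+1)]
      exact Finset.mem_filter.2 ⟨heF, u, v, heq, huVc, Finset.mem_compl.2 hvVc⟩
  have hXval : ∑ e ∈ X, x e < 2 - εa := by
    rw [hX, hεa]
    by_cases h : a = 0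
    · rw [if_pos h, if_pos h, Finset.sum_empty]; norm_num
    · rw [if_neg h, if_neg h]
      have hlt : ∑ e ∈ cut G (Vc (a-1)), x e < 2 := by
        by_cases h0 : a - 1 = 0
        · rw [h0, hcut0]; norm_num
        by_cases hk : a - 1 = k
        · rw [hk, hcutk]; norm_num
        · exact hcutmid (a-1) (by omega) (by omega)
      linarith
  have hYval : ∑ e ∈ Y, x e < 2 - εb := by
    rw [hY, hεb]
    by_cases h : b = k + 1
    · rw [if_pos h, if_pos h, Finset.sum_empty]; norm_num
    · rw [if_neg h, if_neg h]
      have hlt : ∑ e ∈ cut G (Vc b), x e < 2 := by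
        by_cases h0 : b = 0
        · rw [h0, hcut0]; norm_num
        by_cases hk : b = k
        · rw [hk, hcutk]; norm_num
        · exact hcutmid b (by omega) (by omega)
      linarith
  have hcutS_le : ∑ e ∈ cut G S, x e ≤ ∑ e ∈ X, x e + ∑ e ∈ Y, x e := by
    calc ∑ e ∈ cut G S, x e ≤ ∑ e ∈ X ∪ Y, x e :=
        Finset.sum_le_sum_of_subset_of_nonneg hcutS_sub (fun e _ _ => hxnn e)
      _ ≤ _ := by
        have h1 : ∑ e ∈ X ∪ Y, x e + ∑ e ∈ X ∩ Y, x e = ∑ e ∈ X, x e + ∑ e ∈ Y, x e :=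
          Finset.sum_union_inter
        have h2 := hsum_nn (X ∩ Y)
        linarith
  have hSne : S.Nonempty := by
    obtain ⟨y, hy⟩ := level_nonempty hne hchain htop (le_trans hab hb : a ≤ k + 1)
    exact ⟨y, (hmemS y).2 ⟨a, le_rfl, hab, hy⟩⟩
  have hKey : 2 * (∑ e ∈ inducedEdges G S, x e) > 2 * (S.card : ℝ) - 4 := by
    have hh := handshake G x S
    rw [hSdeg, hDab] at hh
    linarith [hXval, hYval, hcutS_le]
  
  have hSel : ∃ i ∈ t, 0 < w i ∧ (Tr i ∩ inducedEdges G S).card + 1 = S.card := by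
    by_contra hcon
    push_neg at hcon
    have hper : ∀ i ∈ t, w i * ((Tr i ∩ inducedEdges G S).card : ℝ)
        ≤ w i * ((S.card : ℝ) - 2) := by
      intro i hi
      rcases eq_or_lt_of_le (hw0 i hi) with h0 | h0
      · rw [← h0]; simp
      · have hle := htb i hi S hSne
        have hne' := hcon i hi h0
        have hnat : (Tr i ∩ inducedEdges G S).card + 2 ≤ S.card := by omega
        have hcast : ((Tr i ∩ inducedEdges G S).card : ℝ) + 2 ≤ (S.card : ℝ) := by
          exact_mod_cast hnat
        exact mul_le_mul_of_nonneg_left (by linarith) (le_of_lt h0)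
    have hbad : ∑ e ∈ inducedEdges G S, x e ≤ (S.card : ℝ) - 2 := by
      rw [hsum]
      calc ∑ i ∈ t, w i * ((Tr i ∩ inducedEdges G S).card : ℝ)
          ≤ ∑ i ∈ t, w i * ((S.card : ℝ) - 2) := Finset.sum_le_sum hper
        _ = (S.card : ℝ) - 2 := by rw [← Finset.sum_mul, hw1, one_mul]
    linarith [hKey]
  have hUtight : ∀ i ∈ t, 0 < w i → (Tr i ∩ inducedEdges G U).card + 1 = U.card := by
    have hnn : ∀ i ∈ t, 0 ≤ w i * (((U.card : ℝ) - 1) - ((Tr i ∩ inducedEdges G U).card : ℝ)) := by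
      intro i hi
      refine mul_nonneg (hw0 i hi) ?_
      have := htb i hi U hUne
      have : ((Tr i ∩ inducedEdges G U).card : ℝ) + 1 ≤ (U.card : ℝ) := by exact_mod_cast this
      linarith
    have hzero : ∑ i ∈ t, w i * (((U.card : ℝ) - 1) - ((Tr i ∩ inducedEdges G U).card : ℝ)) = 0 := by
      have h1 : ∀ i ∈ t, w i * (((U.card : ℝ) - 1) - ((Tr i ∩ inducedEdges G U).card : ℝ))
          = w i * ((U.card : ℝ) - 1) - w i * ((Tr i ∩ inducedEdges G U).card : ℝ) :=
        fun i _ => by ring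
      rw [Finset.sum_congr rfl h1, Finset.sum_sub_distrib, ← Finset.sum_mul, hw1, one_mul,
        ← hsum, hU]
      ring
    intro i hi hwi
    have h0 := (Finset.sum_eq_zero_iff_of_nonneg hnn).1 hzero i hi
    have h1 : ((U.card : ℝ) - 1) - ((Tr i ∩ inducedEdges G U).card : ℝ) = 0 := by
      rcases mul_eq_zero.1 h0 with h | h
      · exact absurd h (ne_of_gt hwi)
      · exact h
    have h2 : ((Tr i ∩ inducedEdges G U).card : ℝ) + 1 = (U.card : ℝ) := by linarith
    exact_mod_cast h2
  obtain ⟨i0, hi0, hwi0, hScnt⟩ := hSel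
  have hUcnt := hUtight i0 hi0 hwi0
  set T := Tr i0 with hT
  have hTsp : IsSpanningTree G T := hTr i0 hi0
  have hpos : ∀ e ∈ T, 0 < x e := by
    intro e he
    have hle : w i0 * (if e ∈ Tr i0 then 1 else 0) ≤ x e := by
      rw [hxeq e]
      refine Finset.single_le_sum (f := fun j => w j * (if e ∈ Tr j then (1:ℝ) else 0))
        (fun j hj => ?_) hi0
      exact mul_nonneg (hw0 j hj) (by by_cases h : e ∈ Tr j <;> simp [h])
    rw [if_pos he, mul_one] at hle
    linarith
  have hEM : inducedEdges G S ∩ inducedEdges G U = inducedEdges G (S ∩ U) := by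
    ext e
    simp only [inducedEdges, Finset.mem_inter, Finset.mem_filter]
    constructor
    · rintro ⟨⟨he, h1⟩, -, h2⟩
      exact ⟨he, fun v hv => ⟨h1 v hv, h2 v hv⟩⟩
    · rintro ⟨he, h⟩
      exact ⟨⟨he, fun v hv => (h v hv).1⟩, he, fun v hv => (h v hv).2⟩
  have hABi : (T ∩ inducedEdges G S) ∩ (T ∩ inducedEdges G U) = T ∩ inducedEdges G (S ∩ U) := by
    rw [← hEM]; ext e; simp only [Finset.mem_inter]; tauto
  rcases Finset.eq_empty_or_nonempty (S ∩ U) with hM | hM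
  · have hMind : T ∩ inducedEdges G (S ∩ U) = ∅ := by
      rw [Finset.eq_empty_iff_forall_notMem]
      intro e he
      have hein := (Finset.mem_filter.1 (Finset.mem_of_mem_inter_right he)).2
      obtain ⟨p, hp⟩ : ∃ p, p ∈ e := by
        induction e using Sym2.ind with | _ p q => exact ⟨p, Sym2.mem_mk_left p q⟩
      have := hein p hp
      rw [hM] at this
      exact absurd this (Finset.notMem_empty p)
    constructor
    · refine ⟨T, hTsp, hpos, ?_, ?_, ?_, ?_⟩
      · rw [hMind]; simp
      · rw [hMind]; simp
      · rw [hMind, hM]; simp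
      · intro u hu; rw [hM] at hu; exact absurd hu (Finset.notMem_empty u)
    · intro u hu; rw [hM] at hu; exact absurd hu (Finset.notMem_empty u)
  · have hSUne : (S ∪ U).Nonempty := by
      obtain ⟨y, hy⟩ := hSne; exact ⟨y, Finset.mem_union_left _ hy⟩
    have hABu_bound : ((T ∩ inducedEdges G S) ∪ (T ∩ inducedEdges G U)).card + 1
        ≤ (S ∪ U).card := by
      refine tree_inter_bound hTsp (S ∪ U) hSUne _ ?_ ?_
      · intro e he
        rcases Finset.mem_union.1 he with h | h
        exacts [Finset.mem_of_mem_inter_left h, Finset.mem_of_mem_inter_left h]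
      · intro e he v hv
        rcases Finset.mem_union.1 he with h | h
        · exact Finset.mem_union_left _
            ((Finset.mem_filter.1 (Finset.mem_of_mem_inter_right h)).2 v hv)
        · exact Finset.mem_union_right _
            ((Finset.mem_filter.1 (Finset.mem_of_mem_inter_right h)).2 v hv)
    have hc1 := Finset.card_union_add_card_inter (T ∩ inducedEdges G S) (T ∩ inducedEdges G U)
    have hc2 := Finset.card_union_add_card_inter S U
    rw [hABi] at hc1
    have hMb : (T ∩ inducedEdges G (S ∩ U)).card + 1 ≤ (S ∩ U).card := htb i0 hi0 (S ∩ U) hM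
    have hMcard : (T ∩ inducedEdges G (S ∩ U)).card + 1 = (S ∩ U).card := by omega
    have hnd : ∀ e ∈ T ∩ inducedEdges G (S ∩ U), ¬ e.IsDiag :=
      fun e he => spanningTree_not_isDiag hTsp e (Finset.mem_of_mem_inter_left he)
    have hacM : (SimpleGraph.fromEdgeSet
        (↑(T ∩ inducedEdges G (S ∩ U)) : Set (Sym2 V))).IsAcyclic :=
      acyclic_mono (SimpleGraph.fromEdgeSet_mono
        (Finset.coe_subset.2 Finset.inter_subset_left)) (spanningTree_acyclic hTsp)
    have hWM : ∀ e ∈ T ∩ inducedEdges G (S ∩ U), ∀ v ∈ e, v ∈ S ∩ U :=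
      fun e he => (Finset.mem_filter.1 (Finset.mem_of_mem_inter_right he)).2
    have hreach := forest_reachable (S ∩ U) (T ∩ inducedEdges G (S ∩ U)) hnd hacM hWM (by omega)
    constructor
    · refine ⟨T, hTsp, hpos, ?_, hWM, by omega, hreach⟩
      intro e he
      have hei : e ∈ inducedEdges G (S ∩ U) :=
        Finset.mem_of_mem_inter_right (Finset.mem_coe.1 he)
      exact SimpleGraph.mem_edgeFinset.1 (Finset.mem_filter.1 hei).1
    · intro u hu v hv
      refine (hreach u hu v hv).mono (SimpleGraph.fromEdgeSet_mono ?_)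
      intro e he
      exact ⟨Finset.mem_of_mem_inter_right (Finset.mem_coe.1 he),
        hpos e (Finset.mem_of_mem_inter_left (Finset.mem_coe.1 he))⟩
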